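/- Let B_μ (μ = 0,1,2,3) be 4×4 real matrices satisfying B_μ B_ν + B_ν B_μ = −2 η_{μν} I for all μ,ν. Then the map Λ : Pin(3,1) → O(1,3) is surjective and two-to-one: for every λ ∈ M₄(ℝ) with λᵀ η λ = η there exist exactly two real 4×4 matrices S with |det S| = 1 and Σ_ν λ_{μν} B_ν = S⁻¹ B_μ S for all μ, and these two matrices are negatives of each other. -/

import Mathlib

open Matrix

/-- The Minkowski metric `diag(1,-1,-1,-1)` as a real 4×4 matrix. -/
noncomputable def minkowskiEta : Matrix (Fin 4) (Fin 4) ℝ :=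
  Matrix.diagonal ![1, -1, -1, -1]

namespace PinProof

abbrev M4 := Matrix (Fin 4) (Fin 4) ℝ

def cc : Fin 4 → ℝ := ![-1, 1, 1, 1]

def sg (b : Bool) : ℝ := if b then -1 else 1

/-- Clifford family conditions in convenient form. -/
def Clf (B : Fin 4 → M4) : Prop :=
  (∀ μ, B μ * B μ = cc μ • 1) ∧ (∀ μ ν, μ ≠ ν → B μ * B ν = -(B ν * B μ))

def tB (B : Fin 4 → M4) (e : Fin 4 → Bool) (μ : Fin 4) : M4 := if e μ then B μ else 1
def Γa (B : Fin 4 → M4) (e : Fin 4 → Bool) : M4 :=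
  tB B e 0 * (tB B e 1 * (tB B e 2 * tB B e 3))
def Γr (B : Fin 4 → M4) (e : Fin 4 → Bool) : M4 :=
  tB B e 3 * (tB B e 2 * (tB B e 1 * tB B e 0))
def σσ (e : Fin 4 → Bool) : ℝ := if e 0 then -1 else 1
def εL (μ : Fin 4) (e : Fin 4 → Bool) : ℝ :=
  ![if e 0 then -1 else 1, sg (e 0), sg (e 0) * sg (e 1),
    sg (e 0) * (sg (e 1) * sg (e 2))] μ
def flipE (μ : Fin 4) (e : Fin 4 → Bool) : Fin 4 → Bool := Function.update e μ (!(e μ))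

section Lemmas
variable {B : Fin 4 → M4} (hB : Clf B)
include hB

lemma sq0 : B 0 * B 0 = -1 := by
  have := hB.1 0; simpa [cc] using this
lemma sq1 : B 1 * B 1 = 1 := by have := hB.1 1; simpa [cc] using this
lemma sq2 : B 2 * B 2 = 1 := by have := hB.1 2; simpa [cc] using this
lemma sq3 : B 3 * B 3 = 1 := by have := hB.1 3; simpa [cc] using this

lemma sq0' (x : M4) : B 0 * (B 0 * x) = -x := by
  rw [← mul_assoc, sq0 hB]; simp
lemma sq1' (x : M4) : B 1 * (B 1 * x) = x := by rw [← mul_assoc, sq1 hB]; simp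
lemma sq2' (x : M4) : B 2 * (B 2 * x) = x := by rw [← mul_assoc, sq2 hB]; simp
lemma sq3' (x : M4) : B 3 * (B 3 * x) = x := by rw [← mul_assoc, sq3 hB]; simp

lemma sw10 : B 1 * B 0 = -(B 0 * B 1) := hB.2 1 0 (by decide)
lemma sw20 : B 2 * B 0 = -(B 0 * B 2) := hB.2 2 0 (by decide)
lemma sw30 : B 3 * B 0 = -(B 0 * B 3) := hB.2 3 0 (by decide)
lemma sw21 : B 2 * B 1 = -(B 1 * B 2) := hB.2 2 1 (by decide)
lemma sw31 : B 3 * B 1 = -(B 1 * B 3) := hB.2 3 1 (by decide)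
lemma sw32 : B 3 * B 2 = -(B 2 * B 3) := hB.2 3 2 (by decide)

lemma sw10' (x : M4) : B 1 * (B 0 * x) = -(B 0 * (B 1 * x)) := by
  rw [← mul_assoc, sw10 hB]; simp [mul_assoc]
lemma sw20' (x : M4) : B 2 * (B 0 * x) = -(B 0 * (B 2 * x)) := by
  rw [← mul_assoc, sw20 hB]; simp [mul_assoc]
lemma sw30' (x : M4) : B 3 * (B 0 * x) = -(B 0 * (B 3 * x)) := by
  rw [← mul_assoc, sw30 hB]; simp [mul_assoc]
lemma sw21' (x : M4) : B 2 * (B 1 * x) = -(B 1 * (B 2 * x)) := by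
  rw [← mul_assoc, sw21 hB]; simp [mul_assoc]
lemma sw31' (x : M4) : B 3 * (B 1 * x) = -(B 1 * (B 3 * x)) := by
  rw [← mul_assoc, sw31 hB]; simp [mul_assoc]
lemma sw32' (x : M4) : B 3 * (B 2 * x) = -(B 2 * (B 3 * x)) := by
  rw [← mul_assoc, sw32 hB]; simp [mul_assoc]

lemma mulΓ (μ : Fin 4) (e : Fin 4 → Bool) :
    B μ * Γa B e = εL μ e • Γa B (flipE μ e) := by
  fin_cases μ <;>
    (cases h0 : e 0 <;> cases h1 : e 1 <;> cases h2 : e 2 <;> cases h3 : e 3 <;>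
      simp [Γa, tB, flipE, εL, sg, Function.update, h0, h1, h2, h3, mul_assoc,
        sq0 hB, sq1 hB, sq2 hB, sq3 hB, sq0' hB, sq1' hB, sq2' hB, sq3' hB,
        sw10 hB, sw20 hB, sw30 hB, sw21 hB, sw31 hB, sw32 hB,
        sw10' hB, sw20' hB, sw30' hB, sw21' hB, sw31' hB, sw32' hB,
        Fin.isValue, Matrix.mul_smul, Matrix.smul_mul, smul_smul])


lemma Γr_mul (μ : Fin 4) (e : Fin 4 → Bool) :
    Γr B e * B μ = εL μ e • Γr B (flipE μ e) := by
  fin_cases μ <;>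
    (cases h0 : e 0 <;> cases h1 : e 1 <;> cases h2 : e 2 <;> cases h3 : e 3 <;>
      simp [Γr, tB, flipE, εL, sg, Function.update, h0, h1, h2, h3, mul_assoc,
        sq0 hB, sq1 hB, sq2 hB, sq3 hB, sq0' hB, sq1' hB, sq2' hB, sq3' hB,
        sw10 hB, sw20 hB, sw30 hB, sw21 hB, sw31 hB, sw32 hB,
        sw10' hB, sw20' hB, sw30' hB, sw21' hB, sw31' hB, sw32' hB,
        Fin.isValue, Matrix.mul_smul, Matrix.smul_mul, smul_smul])

lemma Γa_mul_Γr (e : Fin 4 → Bool) : Γa B e * Γr B e = σσ e • 1 := by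
  cases h0 : e 0 <;> cases h1 : e 1 <;> cases h2 : e 2 <;> cases h3 : e 3 <;>
    simp [Γa, Γr, σσ, tB, h0, h1, h2, h3, mul_assoc,
      sq0 hB, sq1 hB, sq2 hB, sq3 hB, sq0' hB, sq1' hB, sq2' hB, sq3' hB,
        sw10 hB, sw20 hB, sw30 hB, sw21 hB, sw31 hB, sw32 hB,
        sw10' hB, sw20' hB, sw30' hB, sw21' hB, sw31' hB, sw32' hB,
        Fin.isValue, Matrix.mul_smul, Matrix.smul_mul, smul_smul]

lemma Γr_mul_Γa (e : Fin 4 → Bool) : Γr B e * Γa B e = σσ e • 1 := by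
  cases h0 : e 0 <;> cases h1 : e 1 <;> cases h2 : e 2 <;> cases h3 : e 3 <;>
    simp [Γa, Γr, σσ, tB, h0, h1, h2, h3, mul_assoc,
      sq0 hB, sq1 hB, sq2 hB, sq3 hB, sq0' hB, sq1' hB, sq2' hB, sq3' hB,
        sw10 hB, sw20 hB, sw30 hB, sw21 hB, sw31 hB, sw32 hB,
        sw10' hB, sw20' hB, sw30' hB, sw21' hB, sw31' hB, sw32' hB,
        Fin.isValue, Matrix.mul_smul, Matrix.smul_mul, smul_smul]

lemma pm_rev (g : Fin 4 → Bool) : Γr B g = Γa B g ∨ Γr B g = -(Γa B g) := by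
  cases h0 : g 0 <;> cases h1 : g 1 <;> cases h2 : g 2 <;> cases h3 : g 3 <;>
    first
      | (left; (simp [Γa, Γr, tB, h0, h1, h2, h3, mul_assoc, sq0 hB, sq1 hB, sq2 hB, sq3 hB, sq0' hB, sq1' hB, sq2' hB, sq3' hB,
        sw10 hB, sw20 hB, sw30 hB, sw21 hB, sw31 hB, sw32 hB,
        sw10' hB, sw20' hB, sw30' hB, sw21' hB, sw31' hB, sw32' hB,
        Fin.isValue, Matrix.mul_smul, Matrix.smul_mul, smul_smul]; done))
      | (right; (simp [Γa, Γr, tB, h0, h1, h2, h3, mul_assoc, sq0 hB, sq1 hB, sq2 hB, sq3 hB, sq0' hB, sq1' hB, sq2' hB, sq3' hB,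
        sw10 hB, sw20 hB, sw30 hB, sw21 hB, sw31 hB, sw32 hB,
        sw10' hB, sw20' hB, sw30' hB, sw21' hB, sw31' hB, sw32' hB,
        Fin.isValue, Matrix.mul_smul, Matrix.smul_mul, smul_smul]; done))

lemma anticomm_exists (e : Fin 4 → Bool) (he : ∃ ν, e ν = true) :
    ∃ μ, B μ * Γa B e = -(Γa B e * B μ) := by
  cases h0 : e 0 <;> cases h1 : e 1 <;> cases h2 : e 2 <;> cases h3 : e 3 <;>
    first
      | (obtain ⟨ν, hν⟩ := he; fin_cases ν <;> simp_all; done)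
      | (refine ⟨0, ?_⟩; (simp [Γa, tB, h0, h1, h2, h3, mul_assoc, sq0 hB, sq1 hB, sq2 hB, sq3 hB, sq0' hB, sq1' hB, sq2' hB, sq3' hB,
        sw10 hB, sw20 hB, sw30 hB, sw21 hB, sw31 hB, sw32 hB,
        sw10' hB, sw20' hB, sw30' hB, sw21' hB, sw31' hB, sw32' hB,
        Fin.isValue, Matrix.mul_smul, Matrix.smul_mul, smul_smul]; done))
      | (refine ⟨1, ?_⟩; (simp [Γa, tB, h0, h1, h2, h3, mul_assoc, sq0 hB, sq1 hB, sq2 hB, sq3 hB, sq0' hB, sq1' hB, sq2' hB, sq3' hB,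
        sw10 hB, sw20 hB, sw30 hB, sw21 hB, sw31 hB, sw32 hB,
        sw10' hB, sw20' hB, sw30' hB, sw21' hB, sw31' hB, sw32' hB,
        Fin.isValue, Matrix.mul_smul, Matrix.smul_mul, smul_smul]; done))
      | (refine ⟨2, ?_⟩; (simp [Γa, tB, h0, h1, h2, h3, mul_assoc, sq0 hB, sq1 hB, sq2 hB, sq3 hB, sq0' hB, sq1' hB, sq2' hB, sq3' hB,
        sw10 hB, sw20 hB, sw30 hB, sw21 hB, sw31 hB, sw32 hB,
        sw10' hB, sw20' hB, sw30' hB, sw21' hB, sw31' hB, sw32' hB,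
        Fin.isValue, Matrix.mul_smul, Matrix.smul_mul, smul_smul]; done))
      | (refine ⟨3, ?_⟩; (simp [Γa, tB, h0, h1, h2, h3, mul_assoc, sq0 hB, sq1 hB, sq2 hB, sq3 hB, sq0' hB, sq1' hB, sq2' hB, sq3' hB,
        sw10 hB, sw20 hB, sw30 hB, sw21 hB, sw31 hB, sw32 hB,
        sw10' hB, sw20' hB, sw30' hB, sw21' hB, sw31' hB, sw32' hB,
        Fin.isValue, Matrix.mul_smul, Matrix.smul_mul, smul_smul]; done))

def px (e f : Fin 4 → Bool) (k : ℕ) : Fin 4 → Bool :=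
  fun ν => xor (e ν) (f ν && decide (ν.1 < k))

omit hB in
lemma px_zero (e f : Fin 4 → Bool) : px e f 0 = e := by
  funext ν; simp [px]

omit hB in
lemma px_four (e f : Fin 4 → Bool) : px e f 4 = fun ν => xor (e ν) (f ν) := by
  funext ν; simp [px, ν.isLt]

omit hB in
lemma px_succ (e f : Fin 4 → Bool) (μ : Fin 4) :
    px e f (μ.1 + 1) = if f μ then flipE μ (px e f μ.1) else px e f μ.1 := by
  by_cases h : f μ <;> fin_cases μ <;> funext ν <;> fin_cases ν <;>
    simp_all [px, flipE, Function.update_apply] <;>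
    (try (cases hf : f _ <;> cases he : e _ <;> simp_all)) <;> (try decide)

lemma Γr_mul_Γa_xor (e f : Fin 4 → Bool) :
    ∃ s : ℝ, Γr B e * Γa B f = s • Γa B (fun ν => xor (e ν) (f ν)) := by
  have step2 : ∀ (μ : Fin 4) (X : M4), (∃ s : ℝ, X = s • Γr B (px e f μ.1)) →
      ∃ s : ℝ, X * tB B f μ = s • Γr B (px e f (μ.1 + 1)) := by
    rintro μ X ⟨s, rfl⟩
    rw [px_succ]
    by_cases h : f μ
    · exact ⟨s * εL μ (px e f μ.1),
        by simp [tB, h, Matrix.smul_mul, Γr_mul hB, smul_smul]⟩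
    · exact ⟨s, by simp [tB, h]⟩
  have k0 := step2 0 (Γr B e) ⟨1, by rw [show px e f ((0 : Fin 4).1) = e from px_zero e f, one_smul]⟩
  have k3 := step2 3 _ (step2 2 _ (step2 1 _ k0))
  obtain ⟨s, hs⟩ := k3
  rw [show px e f ((3 : Fin 4).1 + 1) = fun ν => xor (e ν) (f ν) from px_four e f] at hs
  obtain ⟨t, ht⟩ : ∃ t : ℝ, Γr B (fun ν => xor (e ν) (f ν))
      = t • Γa B (fun ν => xor (e ν) (f ν)) := by
    rcases pm_rev hB (fun ν => xor (e ν) (f ν)) with h | h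
    exacts [⟨1, by simp [h]⟩, ⟨-1, by simp [h]⟩]
  refine ⟨s * t, ?_⟩
  calc Γr B e * Γa B f
      = ((Γr B e * tB B f 0) * tB B f 1 * tB B f 2) * tB B f 3 := by
        simp [Γa, mul_assoc]
    _ = s • Γr B (fun ν => xor (e ν) (f ν)) := hs
    _ = (s * t) • Γa B (fun ν => xor (e ν) (f ν)) := by rw [ht, smul_smul]

omit hB in
lemma cc_sq (μ : Fin 4) : cc μ * cc μ = 1 := by fin_cases μ <;> norm_num [cc]

lemma trace_Γa (e : Fin 4 → Bool) (he : ∃ ν, e ν = true) :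
    (Γa B e).trace = 0 := by
  obtain ⟨μ, hac⟩ := anticomm_exists hB e he
  have h1 : Γa B e = cc μ • (B μ * (B μ * Γa B e)) := by
    rw [← mul_assoc, hB.1 μ]; simp [smul_smul, cc_sq μ]
  have c1 : (-(Γa B e * B μ) * B μ).trace = -(cc μ * (Γa B e).trace) := by
    rw [neg_mul, Matrix.trace_neg, mul_assoc, hB.1 μ, Matrix.mul_smul, mul_one,
      Matrix.trace_smul, smul_eq_mul]
  have c2 : (Γa B e).trace = cc μ * ((B μ * Γa B e) * B μ).trace := by
    conv_lhs => rw [h1]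
    rw [Matrix.trace_smul, smul_eq_mul, Matrix.trace_mul_comm (B μ) (B μ * Γa B e)]
  rw [hac, c1] at c2
  have c4 : (Γa B e).trace = -((Γa B e).trace) := by
    nth_rewrite 1 [c2]
    rw [mul_neg, ← mul_assoc, cc_sq μ, one_mul]
  linarith

omit hB in
lemma σσ_ne (e : Fin 4 → Bool) : σσ e ≠ 0 := by
  unfold σσ; split <;> norm_num

lemma linind : LinearIndependent ℝ (Γa B) := by
  rw [Fintype.linearIndependent_iff]
  intro g hg f
  have h0 : Matrix.trace (Γr B f * ∑ e, g e • Γa B e) = 0 := by rw [hg]; simp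
  rw [Matrix.mul_sum, Matrix.trace_sum] at h0
  have hterm : ∀ e ∈ Finset.univ, e ≠ f → (Γr B f * (g e • Γa B e)).trace = 0 := by
    intro e _ hef
    obtain ⟨s, hs⟩ := Γr_mul_Γa_xor hB f e
    have hx : ∃ ν, (xor (f ν) (e ν)) = true := by
      obtain ⟨ν, hν⟩ := Function.ne_iff.mp hef
      exact ⟨ν, by revert hν; cases hfν : f ν <;> cases heν : e ν <;> simp_all⟩
    rw [Matrix.mul_smul, Matrix.trace_smul, hs, Matrix.trace_smul,
      trace_Γa hB _ hx]
    simp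
  have hsingle := Finset.sum_eq_single f hterm (by intro h; exact absurd (Finset.mem_univ f) h)
  rw [hsingle] at h0
  rw [Matrix.mul_smul, Matrix.trace_smul, Γr_mul_Γa hB f, Matrix.trace_smul,
    Matrix.trace_one] at h0
  have h16 : g f * (σσ f * 4) = 0 := by simpa using h0
  rcases mul_eq_zero.mp h16 with h | h
  · exact h
  · exact absurd h (mul_ne_zero (σσ_ne f) (by norm_num))

lemma span_top : Submodule.span ℝ (Set.range (Γa B)) = ⊤ := by
  refine (linind hB).span_eq_top_of_card_eq_finrank ?_
  rw [Module.finrank_matrix]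
  simp [Fintype.card_fun]

lemma commutant (M : M4) (hM : ∀ μ, B μ * M = M * B μ) : ∃ k : ℝ, M = k • 1 := by
  have hΓ : ∀ e, Commute M (Γa B e) := by
    intro e
    have ht : ∀ μ, Commute M (tB B e μ) := by
      intro μ; unfold tB; split
      · exact (hM μ).symm
      · exact Commute.one_right M
    exact (ht 0).mul_right ((ht 1).mul_right ((ht 2).mul_right (ht 3)))
  have hcomm : ∀ N : M4, M * N = N * M := by
    intro N
    have hN : N ∈ Submodule.span ℝ (Set.range (Γa B)) := by
      rw [span_top hB]; trivial
    induction hN using Submodule.span_induction with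
    | mem x h => obtain ⟨e, rfl⟩ := h; exact hΓ e
    | zero => simp
    | add x y hx hy ihx ihy => rw [mul_add, add_mul, ihx, ihy]
    | smul a x hx ihx => rw [Matrix.mul_smul, Matrix.smul_mul, ihx]
  obtain ⟨k, hk⟩ := Matrix.mem_range_scalar_of_commute_single
    (M := M) (fun i j _ => (hcomm _).symm)
  refine ⟨k, ?_⟩
  rw [← hk]
  ext i j
  by_cases h : i = j <;>
    simp [Matrix.scalar_apply, Matrix.one_apply, Matrix.diagonal_apply, h]


omit hB in
lemma flipE_invol (μ : Fin 4) : Function.Involutive (flipE μ) := by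
  intro e; funext ν
  by_cases h : ν = μ <;> simp [flipE, Function.update_apply, h]

omit hB in
lemma key_scalar (μ : Fin 4) (e : Fin 4 → Bool) :
    σσ (flipE μ e) * εL μ (flipE μ e) = εL μ e * σσ e := by
  fin_cases μ <;>
    (cases h0 : e 0 <;> cases h1 : e 1 <;> cases h2 : e 2 <;> cases h3 : e 3 <;>
      simp [εL, σσ, sg, flipE, Function.update_apply, h0, h1, h2, h3] <;> norm_num)

end Lemmas

/-- The intertwiner candidate built from a seed matrix `G`. -/
noncomputable def UU (B B' : Fin 4 → M4) (G : M4) : M4 :=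
  ∑ e : Fin 4 → Bool, Γa B e * G * (σσ e • Γr B' e)

section TwoFam
variable {B B' : Fin 4 → M4} (hB : Clf B) (hB' : Clf B')
include hB hB'

lemma intertwine (G : M4) (μ : Fin 4) :
    B μ * UU B B' G = UU B B' G * B' μ := by
  unfold UU
  rw [Finset.mul_sum, Finset.sum_mul]
  have key : ∀ e, B μ * (Γa B e * G * (σσ e • Γr B' e)) =
      (Γa B (flipE μ e) * G * (σσ (flipE μ e) • Γr B' (flipE μ e))) * B' μ := by
    intro e
    have l : B μ * (Γa B e * G * (σσ e • Γr B' e)) =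
        (σσ e * εL μ e) • (Γa B (flipE μ e) * (G * Γr B' e)) := by
      rw [mul_assoc (Γa B e), ← mul_assoc (B μ), mulΓ hB]
      simp only [Matrix.smul_mul, Matrix.mul_smul, smul_smul, mul_assoc]
    have h2 : Γr B' (flipE μ e) * B' μ = εL μ (flipE μ e) • Γr B' e := by
      rw [Γr_mul hB' μ (flipE μ e), flipE_invol]
    have r : (Γa B (flipE μ e) * G * (σσ (flipE μ e) • Γr B' (flipE μ e))) * B' μ
        = (σσ (flipE μ e) * εL μ (flipE μ e)) • (Γa B (flipE μ e) * (G * Γr B' e)) := by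
      simp only [mul_assoc, Matrix.mul_smul, Matrix.smul_mul, h2, smul_smul]
    rw [l, r, key_scalar, mul_comm (σσ e) (εL μ e)]
  calc ∑ e, B μ * (Γa B e * G * (σσ e • Γr B' e))
      = ∑ e, (Γa B (flipE μ e) * G * (σσ (flipE μ e) • Γr B' (flipE μ e))) * B' μ :=
        Finset.sum_congr rfl (fun e _ => key e)
    _ = ∑ e, (Γa B e * G * (σσ e • Γr B' e)) * B' μ :=
        Fintype.sum_bijective (flipE μ) (flipE_invol μ).bijective _ _ (fun e => rfl)

end TwoFam

section Trace4
open Matrix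

lemma tr_E_mul (i : Fin 4) (C : M4) :
    (single i i (1 : ℝ) * C).trace = C i i := by
  rw [Matrix.trace]
  rw [Finset.sum_eq_single i (fun b _ hb => by simp [Matrix.diag, hb])
    (by intro h; exact absurd (Finset.mem_univ i) h)]
  simp [Matrix.diag]

lemma tr4 (i j : Fin 4) (A C : M4) :
    (single i j (1 : ℝ) * A * single j i 1 * C).trace = A j j * C i i := by
  have h1 : single i j (1 : ℝ) * A * single j i 1
      = A j j • single i i 1 := by
    ext a b
    by_cases ha : a = i <;> by_cases hb : b = i <;>
      (simp [ha, hb, Matrix.smul_apply, eq_comm] <;>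
        (right; simp [Matrix.single, ha, hb, eq_comm]) <;> (try split) <;> grind)
  rw [h1, Matrix.smul_mul, Matrix.trace_smul, smul_eq_mul, tr_E_mul]

end Trace4


section KeySum
variable {B B' : Fin 4 → M4} (hB : Clf B) (hB' : Clf B')
include hB hB'

lemma trace_term (i j : Fin 4) (e f : Fin 4 → Bool) :
    ((Γa B' e * single i j 1 * (σσ e • Γr B e)) *
     (Γa B f * single j i 1 * (σσ f • Γr B' f))).trace
    = (σσ e * σσ f) * ((Γr B e * Γa B f) j j * ((Γr B' f * Γa B' e) i i)) := by
  have step1 : (Γa B' e * single i j 1 * (σσ e • Γr B e)) *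
      (Γa B f * single j i 1 * (σσ f • Γr B' f))
      = (σσ e * σσ f) • (Γa B' e * (single i j 1 *
          ((Γr B e * Γa B f) * (single j i 1 * Γr B' f)))) := by
    simp only [Matrix.smul_mul, Matrix.mul_smul, smul_smul, mul_assoc]
    rw [mul_comm (σσ e) (σσ f)]
  rw [step1, Matrix.trace_smul, smul_eq_mul, Matrix.trace_mul_comm]
  have step2 : (single i j (1:ℝ) * ((Γr B e * Γa B f) *
      (single j i 1 * Γr B' f))) * Γa B' e
      = single i j 1 * (Γr B e * Γa B f) * single j i 1 *
        (Γr B' f * Γa B' e) := by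
    simp only [mul_assoc]
  rw [step2, tr4]

lemma key_sum :
    ∑ i, ∑ j, (UU B' B (single i j 1) * UU B B' (single j i 1)).trace
      = 256 := by
  have expand : ∀ i j : Fin 4,
      (UU B' B (single i j 1) * UU B B' (single j i 1)).trace
      = ∑ e, ∑ f, (σσ e * σσ f) *
          ((Γr B e * Γa B f) j j * ((Γr B' f * Γa B' e) i i)) := by
    intro i j
    unfold UU
    rw [Finset.sum_mul_sum, Matrix.trace_sum]
    refine Finset.sum_congr rfl fun e _ => ?_
    rw [Matrix.trace_sum]
    exact Finset.sum_congr rfl fun f _ => trace_term hB hB' i j e f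
  rw [Finset.sum_congr rfl fun i (_ : i ∈ Finset.univ) =>
    Finset.sum_congr rfl fun j (_ : j ∈ Finset.univ) => expand i j]
  have swap : (∑ i : Fin 4, ∑ j : Fin 4, ∑ e : Fin 4 → Bool, ∑ f : Fin 4 → Bool,
      (σσ e * σσ f) * ((Γr B e * Γa B f) j j * ((Γr B' f * Γa B' e) i i)))
      = ∑ e : Fin 4 → Bool, ∑ f : Fin 4 → Bool, ∑ i : Fin 4, ∑ j : Fin 4,
      (σσ e * σσ f) * ((Γr B e * Γa B f) j j * ((Γr B' f * Γa B' e) i i)) := by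
    calc (∑ i : Fin 4, ∑ j : Fin 4, ∑ e : Fin 4 → Bool, ∑ f : Fin 4 → Bool,
        (σσ e * σσ f) * ((Γr B e * Γa B f) j j * ((Γr B' f * Γa B' e) i i)))
        = ∑ i : Fin 4, ∑ e : Fin 4 → Bool, ∑ j : Fin 4, ∑ f : Fin 4 → Bool,
          (σσ e * σσ f) * ((Γr B e * Γa B f) j j * ((Γr B' f * Γa B' e) i i)) :=
        Finset.sum_congr rfl fun i _ => Finset.sum_comm
      _ = ∑ i : Fin 4, ∑ e : Fin 4 → Bool, ∑ f : Fin 4 → Bool, ∑ j : Fin 4,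
          (σσ e * σσ f) * ((Γr B e * Γa B f) j j * ((Γr B' f * Γa B' e) i i)) :=
        Finset.sum_congr rfl fun i _ => Finset.sum_congr rfl fun e _ =>
          Finset.sum_comm
      _ = ∑ e : Fin 4 → Bool, ∑ i : Fin 4, ∑ f : Fin 4 → Bool, ∑ j : Fin 4,
          (σσ e * σσ f) * ((Γr B e * Γa B f) j j * ((Γr B' f * Γa B' e) i i)) :=
        Finset.sum_comm
      _ = ∑ e : Fin 4 → Bool, ∑ f : Fin 4 → Bool, ∑ i : Fin 4, ∑ j : Fin 4,
          (σσ e * σσ f) * ((Γr B e * Γa B f) j j * ((Γr B' f * Γa B' e) i i)) :=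
        Finset.sum_congr rfl fun e _ => Finset.sum_comm
  rw [swap]
  have inner : ∀ e f : Fin 4 → Bool,
      (∑ i : Fin 4, ∑ j : Fin 4, (σσ e * σσ f) *
        ((Γr B e * Γa B f) j j * ((Γr B' f * Γa B' e) i i)))
      = (σσ e * σσ f) * ((Γr B e * Γa B f).trace * (Γr B' f * Γa B' e).trace) := by
    intro e f
    calc (∑ i : Fin 4, ∑ j : Fin 4, (σσ e * σσ f) *
          ((Γr B e * Γa B f) j j * ((Γr B' f * Γa B' e) i i)))
        = (σσ e * σσ f) * ∑ i : Fin 4, ∑ j : Fin 4,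
            ((Γr B e * Γa B f) j j * ((Γr B' f * Γa B' e) i i)) := by
          simp [Finset.mul_sum]
      _ = (σσ e * σσ f) * ((∑ j : Fin 4, (Γr B e * Γa B f) j j) *
            (∑ i : Fin 4, (Γr B' f * Γa B' e) i i)) := by
          congr 1
          rw [Finset.sum_mul_sum]
          exact Finset.sum_comm
      _ = (σσ e * σσ f) * ((Γr B e * Γa B f).trace * (Γr B' f * Γa B' e).trace) := by
          simp [Matrix.trace, Matrix.diag]
  rw [Finset.sum_congr rfl fun e (_ : e ∈ Finset.univ) =>
    Finset.sum_congr rfl fun f (_ : f ∈ Finset.univ) => inner e f]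
  have diag_eval : ∀ e f : Fin 4 → Bool,
      (σσ e * σσ f) * ((Γr B e * Γa B f).trace * (Γr B' f * Γa B' e).trace)
      = if e = f then 16 else 0 := by
    intro e f
    by_cases hef : e = f
    · subst hef
      rw [Γr_mul_Γa hB e, Γr_mul_Γa hB' e]
      simp [Matrix.trace_smul, Matrix.trace_one, σσ]
      split <;> norm_num
    · obtain ⟨s, hs⟩ := Γr_mul_Γa_xor hB e f
      have hx : ∃ ν, (xor (e ν) (f ν)) = true := by
        obtain ⟨ν, hν⟩ := Function.ne_iff.mp hef
        exact ⟨ν, by revert hν; cases heν : e ν <;> cases hfν : f ν <;> simp_all⟩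
      rw [hs, Matrix.trace_smul, trace_Γa hB _ hx]
      simp [hef]
  rw [Finset.sum_congr rfl fun e (_ : e ∈ Finset.univ) =>
    Finset.sum_congr rfl fun f (_ : f ∈ Finset.univ) => diag_eval e f]
  rw [Finset.sum_congr rfl fun e (_ : e ∈ Finset.univ) =>
    Finset.sum_ite_eq (Finset.univ : Finset (Fin 4 → Bool)) e (fun _ => (16:ℝ))]
  simp
  norm_num

end KeySum


lemma clf_of_rel (B : Fin 4 → M4)
    (h : ∀ μ ν, B μ * B ν + B ν * B μ = (-2 * minkowskiEta μ ν) • 1) : Clf B := by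
  constructor
  · intro μ
    have h2 := h μ μ
    have htwo : (2 : ℝ) • (B μ * B μ) = (-2 * minkowskiEta μ μ) • 1 := by
      rw [two_smul]; exact h2
    have hv : B μ * B μ = ((-2 * minkowskiEta μ μ) / 2) • 1 := by
      calc B μ * B μ = (1/2 : ℝ) • ((2 : ℝ) • (B μ * B μ)) := by
            rw [smul_smul]; norm_num
        _ = (1/2 : ℝ) • ((-2 * minkowskiEta μ μ) • 1) := by rw [htwo]
        _ = ((-2 * minkowskiEta μ μ) / 2) • 1 := by rw [smul_smul]; ring_nf
    rw [hv]
    have : ((-2 * minkowskiEta μ μ) / 2) = cc μ := by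
      fin_cases μ <;> norm_num [minkowskiEta, cc, Matrix.diagonal_apply_eq]
    rw [this]
  · intro μ ν hne
    have h2 := h μ ν
    have hz : minkowskiEta μ ν = 0 := Matrix.diagonal_apply_ne _ hne
    rw [hz] at h2
    norm_num at h2
    exact eq_neg_of_add_eq_zero_left h2


end PinProof

open PinProof in
/-- The map `Λ : Pin(3,1) → O(1,3)` is surjective and two-to-one: for every
Lorentz matrix `λ` (i.e. `λᵀ η λ = η`) the set of real 4×4 matrices `S` with `|det S| = 1`
and `Σ_ν λ_{μν} B_ν = S⁻¹ B_μ S` for all `μ` consists of exactly two matrices, which are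
negatives of each other. -/
theorem pin_covers_lorentz_two_to_one
    (B : Fin 4 → Matrix (Fin 4) (Fin 4) ℝ)
    (hB : ∀ μ ν, B μ * B ν + B ν * B μ =
      (-2 * minkowskiEta μ ν) • (1 : Matrix (Fin 4) (Fin 4) ℝ))
    (lam : Matrix (Fin 4) (Fin 4) ℝ)
    (hlam : lamᵀ * minkowskiEta * lam = minkowskiEta) :
    ∃ S : Matrix (Fin 4) (Fin 4) ℝ, S ≠ -S ∧
      {S' : Matrix (Fin 4) (Fin 4) ℝ |
        |S'.det| = 1 ∧ ∀ μ, (∑ ν, lam μ ν • B ν) = S'⁻¹ * B μ * S'} = {S, -S} := by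

  classical
  have hClf : Clf B := clf_of_rel B hB
  -- η² = 1 and λ η λᵀ = η
  have hη2 : minkowskiEta * minkowskiEta = 1 := by
    rw [minkowskiEta, Matrix.diagonal_mul_diagonal]
    have hveq : (fun i => ![(1:ℝ),-1,-1,-1] i * ![(1:ℝ),-1,-1,-1] i) = fun _ => (1:ℝ) := by
      funext μ; fin_cases μ <;> norm_num
    rw [hveq]
    simp [Matrix.diagonal_one]
  have hL1 : (minkowskiEta * lamᵀ * minkowskiEta) * lam = 1 := by
    calc (minkowskiEta * lamᵀ * minkowskiEta) * lam
        = minkowskiEta * (lamᵀ * minkowskiEta * lam) := by simp only [mul_assoc]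
      _ = minkowskiEta * minkowskiEta := by rw [hlam]
      _ = 1 := hη2
  have hR1 : lam * (minkowskiEta * lamᵀ * minkowskiEta) = 1 :=
    mul_eq_one_comm.mp hL1
  have hLEL : lam * minkowskiEta * lamᵀ = minkowskiEta := by
    calc lam * minkowskiEta * lamᵀ
        = lam * minkowskiEta * lamᵀ * (minkowskiEta * minkowskiEta) := by
          rw [hη2, mul_one]
      _ = (lam * (minkowskiEta * lamᵀ * minkowskiEta)) * minkowskiEta := by
          simp only [mul_assoc]
      _ = minkowskiEta := by rw [hR1, one_mul]
  -- the transformed family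
  set B' : Fin 4 → M4 := fun μ => ∑ ν, lam μ ν • B ν with hB'def
  have hB'eq : ∀ μ, (∑ ν, lam μ ν • B ν) = B' μ := fun μ => rfl
  have hrel' : ∀ μ ν, B' μ * B' ν + B' ν * B' μ = (-2 * minkowskiEta μ ν) • 1 := by
    intro μ ν
    have expand : ∀ a b, B' a * B' b = ∑ ρ, ∑ σ, (lam a ρ * lam b σ) • (B ρ * B σ) := by
      intro a b
      rw [show B' a = ∑ ρ, lam a ρ • B ρ from rfl, show B' b = ∑ σ, lam b σ • B σ from rfl,
        Finset.sum_mul_sum]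
      refine Finset.sum_congr rfl fun ρ _ => Finset.sum_congr rfl fun σ _ => ?_
      simp [Matrix.smul_mul, Matrix.mul_smul, smul_smul, mul_comm]
    rw [expand, expand]
    have comm2 : (∑ ρ, ∑ σ, (lam ν ρ * lam μ σ) • (B ρ * B σ))
        = ∑ ρ, ∑ σ, (lam ν σ * lam μ ρ) • (B σ * B ρ) := Finset.sum_comm
    rw [comm2]
    have combine : (∑ ρ, ∑ σ, (lam μ ρ * lam ν σ) • (B ρ * B σ))
        + (∑ ρ, ∑ σ, (lam ν σ * lam μ ρ) • (B σ * B ρ))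
        = ∑ ρ, ∑ σ, (lam μ ρ * (-2 * minkowskiEta ρ σ) * lam ν σ) • (1 : M4) := by
      rw [← Finset.sum_add_distrib]
      refine Finset.sum_congr rfl fun ρ _ => ?_
      rw [← Finset.sum_add_distrib]
      refine Finset.sum_congr rfl fun σ _ => ?_
      rw [mul_comm (lam ν σ) (lam μ ρ), ← smul_add, hB ρ σ, smul_smul]
      ring_nf
    rw [combine]
    have scal : (∑ ρ, ∑ σ, (lam μ ρ * (-2 * minkowskiEta ρ σ) * lam ν σ))
        = -2 * minkowskiEta μ ν := by
      have hmulapp : (lam * minkowskiEta * lamᵀ) μ ν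
          = ∑ σ, (∑ ρ, lam μ ρ * minkowskiEta ρ σ) * lam ν σ := by
        simp [Matrix.mul_apply, Matrix.transpose_apply, Finset.sum_mul]
      calc (∑ ρ, ∑ σ, (lam μ ρ * (-2 * minkowskiEta ρ σ) * lam ν σ))
          = ∑ σ, ∑ ρ, (lam μ ρ * (-2 * minkowskiEta ρ σ) * lam ν σ) := Finset.sum_comm
        _ = ∑ σ, (-2) * ((∑ ρ, lam μ ρ * minkowskiEta ρ σ) * lam ν σ) := by
            refine Finset.sum_congr rfl fun σ _ => ?_
            rw [Finset.sum_mul, Finset.mul_sum]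
            refine Finset.sum_congr rfl fun ρ _ => by ring
        _ = (-2) * ∑ σ, ((∑ ρ, lam μ ρ * minkowskiEta ρ σ) * lam ν σ) := by
            rw [Finset.mul_sum]
        _ = (-2) * (lam * minkowskiEta * lamᵀ) μ ν := by rw [hmulapp]
        _ = -2 * minkowskiEta μ ν := by rw [hLEL]
    calc (∑ ρ, ∑ σ, (lam μ ρ * (-2 * minkowskiEta ρ σ) * lam ν σ) • (1 : M4))
        = (∑ ρ, ∑ σ, (lam μ ρ * (-2 * minkowskiEta ρ σ) * lam ν σ)) • (1 : M4) := by
          rw [Finset.sum_smul]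
          exact Finset.sum_congr rfl fun ρ _ => by rw [Finset.sum_smul]
      _ = (-2 * minkowskiEta μ ν) • (1 : M4) := by rw [scal]
  have hClf' : Clf B' := clf_of_rel B' hrel'
  -- invertible intertwiner
  have hP : ∀ i j : Fin 4, ∀ μ, B' μ *
      (UU B' B (single i j 1) * UU B B' (single j i 1))
      = (UU B' B (single i j 1) * UU B B' (single j i 1)) * B' μ := by
    intro i j μ
    rw [← mul_assoc, intertwine hClf' hClf, mul_assoc, intertwine hClf hClf', ← mul_assoc]
  choose κ hκ using fun i j => commutant hClf' _ (hP i j)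
  have hκsum : ∑ i : Fin 4, ∑ j : Fin 4, κ i j * 4 = 256 := by
    have hks := key_sum hClf hClf'
    rw [← hks]
    refine Finset.sum_congr rfl fun i _ => Finset.sum_congr rfl fun j _ => ?_
    rw [hκ i j]
    simp [Matrix.trace_smul, Matrix.trace_one]
    try norm_num
  have hex : ∃ i j, κ i j ≠ 0 := by
    by_contra h
    push_neg at h
    rw [Finset.sum_congr rfl fun i (_ : i ∈ Finset.univ) =>
      Finset.sum_congr rfl fun j (_ : j ∈ Finset.univ) => by rw [h i j, zero_mul]] at hκsum
    simp at hκsum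
  obtain ⟨i, j, hκne⟩ := hex
  set W := UU B' B (single i j 1) with hWdef
  set V := UU B B' (single j i 1) with hVdef
  have hWV : W * V = κ i j • 1 := hκ i j
  have hVleft : ((κ i j)⁻¹ • W) * V = 1 := by
    rw [Matrix.smul_mul, hWV, smul_smul, inv_mul_cancel₀ hκne, one_smul]
  have hVdet : IsUnit V.det := Matrix.isUnit_det_of_left_inverse hVleft
  have hVV : V⁻¹ * V = 1 := Matrix.nonsing_inv_mul V hVdet
  have hBV : ∀ μ, B μ * V = V * B' μ := fun μ => intertwine hClf hClf' _ μ
  have hVconj : ∀ μ, V⁻¹ * B μ * V = B' μ := by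
    intro μ
    rw [mul_assoc, hBV, ← mul_assoc, hVV, one_mul]
  have hdetne : V.det ≠ 0 := hVdet.ne_zero
  have habs : 0 < |V.det| := abs_pos.mpr hdetne
  set d : ℝ := |V.det| ^ ((-1 : ℝ)/4) with hd
  have hdpos : 0 < d := Real.rpow_pos_of_pos habs _
  have hd4 : d ^ (4 : ℕ) = |V.det|⁻¹ := by
    rw [hd, ← Real.rpow_natCast (|V.det| ^ ((-1 : ℝ)/4)) 4, ← Real.rpow_mul habs.le]
    norm_num
    rw [Real.rpow_neg_one]
  set S := d • V with hSdef
  have hSdet : |S.det| = 1 := by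
    rw [hSdef, Matrix.det_smul, Fintype.card_fin, abs_mul, abs_pow, abs_of_pos hdpos, hd4]
    exact inv_mul_cancel₀ habs.ne'
  have hSleft : ((d⁻¹) • V⁻¹) * S = 1 := by
    rw [hSdef, Matrix.smul_mul, Matrix.mul_smul, hVV, smul_smul,
      inv_mul_cancel₀ hdpos.ne', one_smul]
  have hSdetne : S.det ≠ 0 := by intro h; rw [h] at hSdet; simp at hSdet
  have hSunit : IsUnit S.det := isUnit_iff_ne_zero.mpr hSdetne
  have hSinv : S⁻¹ = d⁻¹ • V⁻¹ := Matrix.inv_eq_left_inv hSleft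
  have hSconj : ∀ μ, S⁻¹ * B μ * S = B' μ := by
    intro μ
    rw [hSinv, hSdef, Matrix.smul_mul, Matrix.mul_smul, Matrix.smul_mul, smul_smul]
    rw [mul_inv_cancel₀ hdpos.ne', one_smul]
    exact hVconj μ
  have hSS : S⁻¹ * S = 1 := Matrix.nonsing_inv_mul S hSunit
  have hSS' : S * S⁻¹ = 1 := Matrix.mul_nonsing_inv S hSunit
  have hSne0 : S ≠ 0 := fun h => hSdetne (by rw [h]; simp)
  have hSneg : S ≠ -S := by
    intro h
    apply hSne0
    have h2 : (2 : ℝ) • S = 0 := by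
      rw [two_smul]; nth_rewrite 2 [h]; simp
    have := smul_eq_zero.mp h2
    rcases this with h' | h'
    · norm_num at h'
    · exact h'
  refine ⟨S, hSneg, ?_⟩
  ext S'
  simp only [Set.mem_setOf_eq, Set.mem_insert_iff, Set.mem_singleton_iff]
  constructor
  · rintro ⟨hdet1, hconj⟩
    simp only [hB'eq] at hconj
    have hS'detne : S'.det ≠ 0 := by intro h; rw [h] at hdet1; simp at hdet1
    have hS'unit : IsUnit S'.det := isUnit_iff_ne_zero.mpr hS'detne
    have hS'S' : S' * S'⁻¹ = 1 := Matrix.mul_nonsing_inv _ hS'unit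
    have hBS' : ∀ μ, B μ * S' = S' * B' μ := by
      intro μ
      calc B μ * S' = S' * S'⁻¹ * B μ * S' := by rw [hS'S', one_mul]
        _ = S' * (S'⁻¹ * B μ * S') := by simp only [mul_assoc]
        _ = S' * B' μ := by rw [← hconj μ]
    have hBS : ∀ μ, B μ * S = S * B' μ := by
      intro μ
      calc B μ * S = S * S⁻¹ * B μ * S := by rw [hSS', one_mul]
        _ = S * (S⁻¹ * B μ * S) := by simp only [mul_assoc]
        _ = S * B' μ := by rw [hSconj μ]
    have hcomm1 : ∀ μ, B' μ * S⁻¹ = S⁻¹ * B μ := by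
      intro μ
      calc B' μ * S⁻¹ = S⁻¹ * S * B' μ * S⁻¹ := by rw [hSS, one_mul]
        _ = S⁻¹ * (S * B' μ) * S⁻¹ := by simp only [mul_assoc]
        _ = S⁻¹ * (B μ * S) * S⁻¹ := by rw [← hBS μ]
        _ = S⁻¹ * B μ * (S * S⁻¹) := by simp only [mul_assoc]
        _ = S⁻¹ * B μ := by rw [hSS', mul_one]
    have hM : ∀ μ, B μ * (S' * S⁻¹) = (S' * S⁻¹) * B μ := by
      intro μ
      calc B μ * (S' * S⁻¹) = (B μ * S') * S⁻¹ := by rw [mul_assoc]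
        _ = (S' * B' μ) * S⁻¹ := by rw [hBS' μ]
        _ = S' * (B' μ * S⁻¹) := by rw [mul_assoc]
        _ = S' * (S⁻¹ * B μ) := by rw [hcomm1 μ]
        _ = (S' * S⁻¹) * B μ := by rw [mul_assoc]
    obtain ⟨k, hk⟩ := commutant hClf (S' * S⁻¹) hM
    have hS'k : S' = k • S := by
      calc S' = S' * S⁻¹ * S := by rw [mul_assoc, hSS, mul_one]
        _ = (k • 1) * S := by rw [hk]
        _ = k • S := by rw [Matrix.smul_mul, one_mul]
    have hk4 : |k| ^ (4 : ℕ) = 1 := by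
      have hdet2 : |S'.det| = |k| ^ (4 : ℕ) * |S.det| := by
        rw [hS'k, Matrix.det_smul, Fintype.card_fin, abs_mul, abs_pow]
      rw [hdet1, hSdet, mul_one] at hdet2
      exact hdet2.symm
    have habsk : |k| = 1 := by
      have h0 := abs_nonneg k
      have hfac : (|k| - 1) * (|k|^3 + |k|^2 + |k| + 1) = |k| ^ (4:ℕ) - 1 := by ring
      have hzero : (|k| - 1) * (|k|^3 + |k|^2 + |k| + 1) = 0 := by
        rw [hfac, hk4]; ring
      have hpos : 0 < |k|^3 + |k|^2 + |k| + 1 := by positivity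
      rcases mul_eq_zero.mp hzero with h' | h'
      · linarith
      · exact absurd h' hpos.ne'
    rcases (abs_eq (by norm_num : (0:ℝ) ≤ 1)).mp habsk with hk1 | hk1
    · left; rw [hS'k, hk1, one_smul]
    · right; rw [hS'k, hk1, ← neg_one_smul ℝ S]
  · rintro (rfl | rfl)
    · refine ⟨hSdet, fun μ => ?_⟩
      rw [hB'eq μ]
      exact (hSconj μ).symm
    · have hdetneg : |(-S).det| = 1 := by
        rw [Matrix.det_neg, Fintype.card_fin]
        norm_num
        exact hSdet
      have hSneginv : (-S)⁻¹ = -(S⁻¹) := by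
        apply Matrix.inv_eq_left_inv
        rw [Matrix.neg_mul, Matrix.mul_neg, neg_neg, hSS]
      refine ⟨hdetneg, fun μ => ?_⟩
      rw [hB'eq μ, hSneginv]
      rw [Matrix.neg_mul, Matrix.mul_neg, Matrix.neg_mul, neg_neg]
      exact (hSconj μ).symm
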